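/- Let U ⊆ ℝ³ be open, let w : ℝ³ → ℝ³ be a smooth vector field with w × (curl w) = 0 and helicity density h = w · (curl w) nonzero at every point of U, and let ℓ, ψ, θ : U → ℝ be smooth functions with w = cos θ ∇ψ + sin θ ∇ℓ on U. Define L_θ = ℓ cos θ − ψ sin θ. Then w · ∇θ = 0 and w · ∇L_θ = 0 on U; that is, θ and L_θ are local integral invariants of the flow generated by w. -/

import Mathlib

noncomputable section

abbrev R3 : Type := Fin 3 → ℝ

/-- Euclidean dot product on ℝ³. -/
def dot3 (u v : R3) : ℝ := u 0 * v 0 + u 1 * v 1 + u 2 * v 2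

/-- Cross product on ℝ³. -/
def cross3 (u v : R3) : R3 :=
  ![u 1 * v 2 - u 2 * v 1, u 2 * v 0 - u 0 * v 2, u 0 * v 1 - u 1 * v 0]

/-- Euclidean norm on ℝ³. -/
def norm3 (u : R3) : ℝ := Real.sqrt (dot3 u u)

/-- Partial derivative of a scalar field in the `i`-th coordinate direction. -/
def pd (i : Fin 3) (f : R3 → ℝ) (x : R3) : ℝ := fderiv ℝ f x (Pi.single i 1)

/-- Gradient of a scalar field. -/
def grad3 (f : R3 → ℝ) (x : R3) : R3 := fun i => pd i f x

/-- Curl of a vector field. -/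
def curl3 (w : R3 → R3) (x : R3) : R3 :=
  ![pd 1 (fun y => w y 2) x - pd 2 (fun y => w y 1) x,
    pd 2 (fun y => w y 0) x - pd 0 (fun y => w y 2) x,
    pd 0 (fun y => w y 1) x - pd 1 (fun y => w y 0) x]

/-- Divergence of a vector field. -/
def div3 (w : R3 → R3) (x : R3) : ℝ :=
  pd 0 (fun y => w y 0) x + pd 1 (fun y => w y 1) x + pd 2 (fun y => w y 2) x

/-- Laplacian of a scalar field. -/
def lap3 (f : R3 → ℝ) (x : R3) : ℝ := div3 (grad3 f) x

private lemma pd_congr' {f g : R3 → ℝ} {x : R3} (h : f =ᶠ[nhds x] g) (i : Fin 3) :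
    pd i f x = pd i g x := by
  unfold pd; rw [Filter.EventuallyEq.fderiv_eq h]

private lemma pd_eq' {f : R3 → ℝ} {D : R3 →L[ℝ] ℝ} {x : R3}
    (h : HasFDerivAt f D x) (i : Fin 3) : pd i f x = D (Pi.single i 1) := by
  unfold pd; rw [h.fderiv]

/-- A nontrivial Beltrami flow admits the two local invariants `θ` and
`L_θ = ℓ cos θ − ψ sin θ`. -/
theorem beltrami_local_invariants
    (U : Set R3) (hUopen : IsOpen U)
    (w : R3 → R3) (hw : ContDiff ℝ (⊤ : ℕ∞) w)
    (hBeltrami : ∀ x ∈ U, cross3 (w x) (curl3 w x) = 0)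
    (hhel : ∀ x ∈ U, dot3 (w x) (curl3 w x) ≠ 0)
    (ℓ ψ θ : R3 → ℝ)
    (hℓ : ContDiffOn ℝ (⊤ : ℕ∞) ℓ U) (hψ : ContDiffOn ℝ (⊤ : ℕ∞) ψ U)
    (hθ : ContDiffOn ℝ (⊤ : ℕ∞) θ U)
    (hrep : ∀ x ∈ U, w x = Real.cos (θ x) • grad3 ψ x + Real.sin (θ x) • grad3 ℓ x) :
    ∀ x ∈ U,
      dot3 (w x) (grad3 θ x) = 0 ∧
      dot3 (w x) (grad3 (fun y => ℓ y * Real.cos (θ y) - ψ y * Real.sin (θ y)) x) = 0 := by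
  intro x hx
  have h1 : (1 : WithTop ℕ∞) ≤ ((⊤:ℕ∞) : WithTop ℕ∞) := by exact_mod_cast le_top
  have h2 : (2 : WithTop ℕ∞) ≤ ((⊤:ℕ∞) : WithTop ℕ∞) := by decide
  have hp1 : ((⊤:ℕ∞) : WithTop ℕ∞) + 1 ≤ ((⊤:ℕ∞) : WithTop ℕ∞) := by exact_mod_cast le_top
  have hmem := hUopen.mem_nhds hx
  have hθx : ContDiffAt ℝ ((⊤:ℕ∞) : WithTop ℕ∞) θ x := (hθ x hx).contDiffAt hmem
  have hψx : ContDiffAt ℝ ((⊤:ℕ∞) : WithTop ℕ∞) ψ x := (hψ x hx).contDiffAt hmem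
  have hℓx : ContDiffAt ℝ ((⊤:ℕ∞) : WithTop ℕ∞) ℓ x := (hℓ x hx).contDiffAt hmem
  -- first derivatives
  have hθ' : HasFDerivAt θ (fderiv ℝ θ x) x := (hθx.differentiableAt (lt_of_lt_of_le zero_lt_one h1).ne').hasFDerivAt
  have hψ' : HasFDerivAt ψ (fderiv ℝ ψ x) x := (hψx.differentiableAt (lt_of_lt_of_le zero_lt_one h1).ne').hasFDerivAt
  have hℓ' : HasFDerivAt ℓ (fderiv ℝ ℓ x) x := (hℓx.differentiableAt (lt_of_lt_of_le zero_lt_one h1).ne').hasFDerivAt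
  -- second derivatives: `ψ` and `ℓ` must be differentiated twice
  have hFψ : DifferentiableAt ℝ (fderiv ℝ ψ) x :=
    (hψx.fderiv_right hp1).differentiableAt (lt_of_lt_of_le zero_lt_one h1).ne'
  have hFℓ : DifferentiableAt ℝ (fderiv ℝ ℓ) x :=
    (hℓx.fderiv_right hp1).differentiableAt (lt_of_lt_of_le zero_lt_one h1).ne'
  have hPψ : ∀ k : Fin 3, HasFDerivAt (fun y => pd k ψ y)
      ((ContinuousLinearMap.apply ℝ ℝ (Pi.single k 1 : R3)).comp
        (fderiv ℝ (fderiv ℝ ψ) x)) x := fun k =>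
    ((ContinuousLinearMap.apply ℝ ℝ (Pi.single k 1 : R3)).hasFDerivAt).comp x hFψ.hasFDerivAt
  have hPℓ : ∀ k : Fin 3, HasFDerivAt (fun y => pd k ℓ y)
      ((ContinuousLinearMap.apply ℝ ℝ (Pi.single k 1 : R3)).comp
        (fderiv ℝ (fderiv ℝ ℓ) x)) x := fun k =>
    ((ContinuousLinearMap.apply ℝ ℝ (Pi.single k 1 : R3)).hasFDerivAt).comp x hFℓ.hasFDerivAt
  -- abbreviations for the atoms
  set G : Fin 3 → ℝ := fun j => fderiv ℝ θ x (Pi.single j 1) with hG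
  set Pψ : Fin 3 → ℝ := fun j => fderiv ℝ ψ x (Pi.single j 1) with hPψ'
  set Pℓ : Fin 3 → ℝ := fun j => fderiv ℝ ℓ x (Pi.single j 1) with hPℓ'
  set Bψ : Fin 3 → Fin 3 → ℝ :=
    fun j k => fderiv ℝ (fderiv ℝ ψ) x (Pi.single j 1) (Pi.single k 1) with hBψ
  set Bℓ : Fin 3 → Fin 3 → ℝ :=
    fun j k => fderiv ℝ (fderiv ℝ ℓ) x (Pi.single j 1) (Pi.single k 1) with hBℓ
  have hsψ : ∀ j k, Bψ j k = Bψ k j := fun j k => hψx.isSymmSndFDerivAt (by rw [minSmoothness_of_isRCLikeNormedField]; exact h2) _ _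
  have hsℓ : ∀ j k, Bℓ j k = Bℓ k j := fun j k => hℓx.isSymmSndFDerivAt (by rw [minSmoothness_of_isRCLikeNormedField]; exact h2) _ _
  -- derivatives of the components of w
  have hwk : ∀ j k : Fin 3, pd j (fun y => w y k) x =
      Real.cos (θ x) * Bψ j k + Real.sin (θ x) * Bℓ j k
        + G j * (Real.cos (θ x) * Pℓ k - Real.sin (θ x) * Pψ k) := by
    intro j k
    have hev : (fun y => w y k) =ᶠ[nhds x]
        (fun y => Real.cos (θ y) * pd k ψ y + Real.sin (θ y) * pd k ℓ y) := by
      filter_upwards [hmem] with y hy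
      rw [hrep y hy]
      simp [grad3, Pi.add_apply, Pi.smul_apply, smul_eq_mul]
    rw [pd_congr' hev j]
    have hD := ((hθ'.cos.mul (hPψ k)).add (hθ'.sin.mul (hPℓ k)))
    rw [pd_eq' (f := fun y => Real.cos (θ y) * pd k ψ y + Real.sin (θ y) * pd k ℓ y) hD j]
    simp only [ContinuousLinearMap.add_apply, ContinuousLinearMap.smul_apply,
      ContinuousLinearMap.coe_comp', Function.comp_apply,
      ContinuousLinearMap.apply_apply, smul_eq_mul, ContinuousLinearMap.neg_apply,
      neg_smul, Pi.smul_apply, Pi.neg_apply]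
    simp only [pd, hBψ, hBℓ, hG, hPψ', hPℓ']
    ring
  -- the vector V = cos θ ∇ℓ − sin θ ∇ψ
  set V : Fin 3 → ℝ := fun k => Real.cos (θ x) * Pℓ k - Real.sin (θ x) * Pψ k with hV
  -- curl w = ∇θ × V at x
  have hC0 : curl3 w x 0 = G 1 * V 2 - G 2 * V 1 := by
    show pd 1 (fun y => w y 2) x - pd 2 (fun y => w y 1) x = _
    rw [hwk 1 2, hwk 2 1]
    have := hsψ 1 2; have := hsℓ 1 2
    simp only [hV]
    linear_combination Real.cos (θ x) * hsψ 1 2 + Real.sin (θ x) * hsℓ 1 2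
  have hC1 : curl3 w x 1 = G 2 * V 0 - G 0 * V 2 := by
    show pd 2 (fun y => w y 0) x - pd 0 (fun y => w y 2) x = _
    rw [hwk 2 0, hwk 0 2]
    simp only [hV]
    linear_combination Real.cos (θ x) * hsψ 2 0 + Real.sin (θ x) * hsℓ 2 0
  have hC2 : curl3 w x 2 = G 0 * V 1 - G 1 * V 0 := by
    show pd 0 (fun y => w y 1) x - pd 1 (fun y => w y 0) x = _
    rw [hwk 0 1, hwk 1 0]
    simp only [hV]
    linear_combination Real.cos (θ x) * hsψ 0 1 + Real.sin (θ x) * hsℓ 0 1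
  -- helper: components of the Beltrami condition
  have hB := hBeltrami x hx
  have hb0 : w x 1 * curl3 w x 2 - w x 2 * curl3 w x 1 = 0 := by
    have := congrFun hB 0; simpa [cross3] using this
  have hb1 : w x 2 * curl3 w x 0 - w x 0 * curl3 w x 2 = 0 := by
    have := congrFun hB 1; simpa [cross3] using this
  have hb2 : w x 0 * curl3 w x 1 - w x 1 * curl3 w x 0 = 0 := by
    have := congrFun hB 2; simpa [cross3] using this
  have hhelx := hhel x hx
  -- grad θ at x, component form
  have hGg : ∀ j, grad3 θ x j = G j := fun j => rfl
  -- ∇θ ⟂ curl w  and  V ⟂ curl w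
  have hgc : dot3 (curl3 w x) (grad3 θ x) = 0 := by
    simp only [dot3, hGg, hC0, hC1, hC2]; ring
  have hvc : dot3 (curl3 w x) V = 0 := by
    simp only [dot3, hC0, hC1, hC2]; ring
  -- Lagrange-type identity from w × curl w = 0
  have key : ∀ u : Fin 3 → ℝ,
      dot3 (w x) u * dot3 (w x) (curl3 w x) = dot3 (w x) (w x) * dot3 (curl3 w x) u := by
    intro u
    simp only [dot3]
    linear_combination (-(w x 1 * u 2 - w x 2 * u 1)) * hb0
      + (-(w x 2 * u 0 - w x 0 * u 2)) * hb1 + (-(w x 0 * u 1 - w x 1 * u 0)) * hb2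
  have hwG : dot3 (w x) (grad3 θ x) = 0 := by
    have := key (grad3 θ x)
    rw [hgc, mul_zero] at this
    rcases mul_eq_zero.1 this with h | h
    · exact h
    · exact absurd h hhelx
  have hwV : dot3 (w x) V = 0 := by
    have := key V
    rw [hvc, mul_zero] at this
    rcases mul_eq_zero.1 this with h | h
    · exact h
    · exact absurd h hhelx
  refine ⟨hwG, ?_⟩
  -- derivative of L = ℓ cos θ − ψ sin θ
  have hL := (hℓ'.mul hθ'.cos).sub (hψ'.mul hθ'.sin)
  have hLk : ∀ i : Fin 3,
      grad3 (fun y => ℓ y * Real.cos (θ y) - ψ y * Real.sin (θ y)) x i =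
        V i - (ℓ x * Real.sin (θ x) + ψ x * Real.cos (θ x)) * G i := by
    intro i
    show pd i _ x = _
    rw [pd_eq' (f := fun y => ℓ y * Real.cos (θ y) - ψ y * Real.sin (θ y)) hL i]
    simp only [ContinuousLinearMap.sub_apply, ContinuousLinearMap.add_apply,
      ContinuousLinearMap.smul_apply, smul_eq_mul, neg_smul, Pi.smul_apply, Pi.neg_apply]
    simp only [pd, hV, hG, hPψ', hPℓ', ContinuousLinearMap.neg_apply,
      ContinuousLinearMap.smul_apply, smul_eq_mul]
    ring
  have hwGe : w x 0 * grad3 θ x 0 + w x 1 * grad3 θ x 1 + w x 2 * grad3 θ x 2 = 0 := hwG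
  have hwVe : w x 0 * V 0 + w x 1 * V 1 + w x 2 * V 2 = 0 := hwV
  simp only [dot3, hLk, hGg] at *
  linear_combination hwVe - (ℓ x * Real.sin (θ x) + ψ x * Real.cos (θ x)) * hwGe
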